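/- If x and y are elements of a free group F lying in a subgroup H of F, x and y are conjugate in an overgroup G = F *_C K (amalgamated product over cyclic C ≤ F), and neither x nor y is conjugate in F into C, then x and y are conjugate in F. -/

import Mathlib

open Monoid Monoid.PushoutI Monoid.PushoutI.NormalWord Subgroup Subgroup.IsComplement Function List

section Aux

variable {H : Type*} [Group H] {G : Bool → Type*} [∀ i, Group (G i)]
  {φ : ∀ i, H →* G i} {d : Transversal φ}

lemma aux_not_mem_range_of_mem_set {i : Bool} {g : G i} (hg : g ∈ d.set i) (hg1 : g ≠ 1) :
    g ∉ (φ i).range := by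
  intro hr
  apply hg1
  have h2 := (coe_equiv_snd_eq_one_iff_mem (d.compl i) (d.one_mem i)).2 hr
  have h1 := (equiv_snd_eq_self_iff_mem (d.compl i) (one_mem _)).2 hg
  rw [h1] at h2
  exact h2

lemma aux_ofCoprodI_word_prod (W : Monoid.CoprodI.Word G) :
    ofCoprodI (φ := φ) W.prod = (W.toList.map fun l => of (φ := φ) l.1 l.2).prod := by
  rw [Monoid.CoprodI.Word.prod, map_list_prod, List.map_map]
  congr 1

end Aux

section Aux2

variable {H : Type*} [Group H] {G : Bool → Type*} [∀ i, Group (G i)]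
  {φ : ∀ i, H →* G i} {d : Transversal φ}

lemma aux_rev_inv_prod (T : List (Σ i, G i)) :
    ((T.reverse.map (fun l => (⟨l.1, l.2⁻¹⟩ : Σ i, G i))).map
        fun l => of (φ := φ) l.1 l.2).prod
      = ((T.map fun l => of (φ := φ) l.1 l.2).prod)⁻¹ := by
  induction T with
  | nil => simp
  | cons hd tl ih =>
    simp only [List.reverse_cons, List.map_append, List.prod_append, List.map_cons,
      List.prod_cons, List.map_nil, List.prod_nil, ih, mul_inv_rev, map_inv, mul_one]

/-- The key contradiction: conjugating `a⁻¹ x a` (a reduced pattern `false,true,false`)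
by a normal word not starting with `false` gives a reduced word of length ≥ 3, which
cannot be a single letter. -/
lemma aux_big_word_ne (hφ : ∀ i, Function.Injective (φ i))
    (w : NormalWord d) (hw1 : w.head = 1) (hwf : w.fstIdx ≠ some false)
    {a : G false} (ha : a ∉ (φ false).range)
    {x : G true} (hx : x ∉ (φ true).range)
    (j : Bool) (y : G j) :
    w.prod⁻¹ * of false a⁻¹ * of true x * of false a * w.prod ≠ of (φ := φ) j y := by
  classical
  have ha1 : a ≠ 1 := fun h => ha (h ▸ one_mem _)
  have hx1 : x ≠ 1 := fun h => hx (h ▸ one_mem _)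
  set L : List (Σ i, G i) :=
    (w.toList.reverse.map (fun l => (⟨l.1, l.2⁻¹⟩ : Σ i, G i))) ++
      (⟨false, a⁻¹⟩ :: ⟨true, x⟩ :: ⟨false, a⟩ :: w.toList) with hL
  have hhead : ∀ l ∈ w.toList.head?, false ≠ l.1 := Monoid.CoprodI.Word.fstIdx_ne_iff.mp hwf
  have hne1 : ∀ l ∈ L, Sigma.snd l ≠ 1 := by
    intro l hl
    rw [hL, List.mem_append] at hl
    rcases hl with hl | hl
    · rcases List.mem_map.1 hl with ⟨l', hl', rfl⟩
      simpa using w.ne_one l' (List.mem_reverse.1 hl')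
    · simp only [List.mem_cons] at hl
      rcases hl with rfl | rfl | rfl | hl
      · simpa using ha1
      · simpa using hx1
      · simpa using ha1
      · exact w.ne_one l hl
  have hchain : L.Chain' (fun l l' => Sigma.fst l ≠ Sigma.fst l') := by
    rw [hL]
    show List.IsChain _ _
    rw [List.isChain_append]
    refine ⟨?_, ?_, ?_⟩
    · rw [List.isChain_map, List.isChain_reverse]
      exact w.chain_ne.imp (fun _ _ h => Ne.symm h)
    · refine List.IsChain.cons_cons (by simp) (List.IsChain.cons_cons (by simp) ?_)
      exact List.IsChain.cons w.chain_ne (fun l hl => (hhead l hl))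
    · intro z hz l' hl'
      simp only [List.head?_cons, Option.mem_def, Option.some.injEq] at hl'
      subst hl'
      rw [List.getLast?_map, Option.mem_def, Option.map_eq_some_iff] at hz
      rcases hz with ⟨l', hl', rfl⟩
      rw [List.getLast?_reverse] at hl'
      exact fun h => hhead l' hl' (by simpa using h.symm)
  set W : Monoid.CoprodI.Word G := ⟨L, hne1, hchain⟩ with hW
  have hred : Monoid.PushoutI.Reduced φ W := by
    intro l hl
    rw [hW] at hl
    simp only [hL, List.mem_append, List.mem_cons] at hl
    rcases hl with hl | rfl | rfl | rfl | hl
    · rcases List.mem_map.1 hl with ⟨l', hl', rfl⟩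
      have := aux_not_mem_range_of_mem_set (d := d)
        (w.normalized l'.1 l'.2 (by simpa using List.mem_reverse.1 hl'))
        (w.ne_one l' (List.mem_reverse.1 hl'))
      simpa using fun h => this ((inv_mem_iff (x := l'.2)).mp h)
    · simpa using fun h => ha ((inv_mem_iff (x := a)).mp h)
    · exact hx
    · exact ha
    · exact aux_not_mem_range_of_mem_set (d := d)
        (w.normalized l.1 l.2 hl) (w.ne_one l hl)
  -- the product of the big word
  have hTprod : ((w.toList.map fun l => of (φ := φ) l.1 l.2)).prod = w.prod := by
    rw [Monoid.PushoutI.NormalWord.prod, hw1, map_one, one_mul, aux_ofCoprodI_word_prod]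
  have hWprod : ofCoprodI (φ := φ) W.prod =
      w.prod⁻¹ * of false a⁻¹ * of true x * of false a * w.prod := by
    rw [aux_ofCoprodI_word_prod]
    show ((L.map fun l => of (φ := φ) l.1 l.2)).prod = _
    rw [hL, List.map_append, List.prod_append, aux_rev_inv_prod, hTprod]
    simp only [List.map_cons, List.prod_cons]
    rw [hTprod]
    group
  intro heq
  rw [← hWprod] at heq
  by_cases hyr : y ∈ (φ j).range
  · rcases hyr with ⟨c, rfl⟩
    have hmem : ofCoprodI (φ := φ) W.prod ∈ (base φ).range := by
      rw [heq, of_apply_eq_base]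
      exact ⟨c, rfl⟩
    have := Monoid.PushoutI.Reduced.eq_empty_of_mem_range hφ hred hmem
    have hlen : W.toList = [] := by rw [this]; rfl
    simp [hW, hL] at hlen
  · -- y ∉ range: compare lengths of normal forms
    have hy1 : y ≠ 1 := fun h => hyr (by rw [h]; exact one_mem _)
    set Wy : Monoid.CoprodI.Word G := ⟨[⟨j, y⟩], by simpa using hy1,
      List.isChain_singleton _⟩ with hWy
    have hredy : Monoid.PushoutI.Reduced φ Wy := by
      intro l hl
      simp only [hWy, List.mem_singleton] at hl
      subst hl
      exact hyr
    obtain ⟨w₁, hw₁, hw₁map⟩ := hred.exists_normalWord_prod_eq d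
    obtain ⟨w₂, hw₂, hw₂map⟩ := hredy.exists_normalWord_prod_eq d
    have hWyprod : ofCoprodI (φ := φ) Wy.prod = of (φ := φ) j y := by
      rw [aux_ofCoprodI_word_prod]
      simp [hWy]
    have : w₁ = w₂ := Monoid.PushoutI.NormalWord.prod_injective
      (by rw [hw₁, hw₂, hWyprod, heq])
    have hlen : (W.toList.map Sigma.fst).length = (Wy.toList.map Sigma.fst).length := by
      rw [← hw₁map, ← hw₂map, this]
    simp only [List.length_map, hW, hWy, hL] at hlen
    simp at hlen
    omega

end Aux2

section Aux3

variable {H : Type*} [Group H] {G : Bool → Type*} [∀ i, Group (G i)]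
  {φ : ∀ i, H →* G i}

lemma aux_key (hφ : ∀ i, Function.Injective (φ i)) (d : Transversal φ)
    (w : NormalWord d) :
    ∀ (x : G true), (∀ c ∈ (φ true).range, ¬ IsConj x c) →
      (∀ y : G true, w.prod⁻¹ * of true x * w.prod = of (φ := φ) true y → IsConj x y) ∧
      (∀ y : G false, w.prod⁻¹ * of true x * w.prod = of (φ := φ) false y → False) := by
  classical
  induction w using Monoid.PushoutI.NormalWord.consRecOn with
  | empty =>
    intro x hx
    have hxr : x ∉ (φ true).range := fun hr => hx x hr (IsConj.refl x)
    constructor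
    · intro y hxy
      simp only [Monoid.PushoutI.NormalWord.prod_empty, inv_one, one_mul, mul_one] at hxy
      exact (Monoid.PushoutI.of_injective hφ true hxy) ▸ IsConj.refl x
    · intro y hxy
      simp only [Monoid.PushoutI.NormalWord.prod_empty, inv_one, one_mul, mul_one] at hxy
      have hmem : of (φ := φ) true x ∈ (of (φ := φ) true).range ⊓ (of (φ := φ) false).range := by
        exact ⟨⟨x, rfl⟩, ⟨y, hxy.symm⟩⟩
      rw [Monoid.PushoutI.inf_of_range_eq_base_range hφ (by simp : (true : Bool) ≠ false)]
        at hmem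
      rcases hmem with ⟨c, hc⟩
      rw [← Monoid.PushoutI.of_apply_eq_base φ true c] at hc
      exact hxr ⟨c, Monoid.PushoutI.of_injective hφ true hc⟩
  | cons i a w hmw hgn hgr hw1 ih =>
    intro x hx
    have hxr : x ∉ (φ true).range := fun hr => hx x hr (IsConj.refl x)
    have hprod : (Monoid.PushoutI.NormalWord.cons a w hmw hgr).prod = of i a * w.prod :=
      Monoid.PushoutI.NormalWord.prod_cons _ _ _ _
    cases i with
    | true =>
      have hconj : IsConj x (a⁻¹ * x * a) := by
        rw [isConj_iff]
        exact ⟨a⁻¹, by group⟩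
      have hx₂r : ∀ c ∈ (φ true).range, ¬ IsConj (a⁻¹ * x * a) c := fun c hc hcj =>
        hx c hc (hconj.trans hcj)
      have heq :
          (Monoid.PushoutI.NormalWord.cons a w hmw hgr).prod⁻¹ * of (φ := φ) true x *
            (Monoid.PushoutI.NormalWord.cons a w hmw hgr).prod
          = w.prod⁻¹ * of (φ := φ) true (a⁻¹ * x * a) * w.prod := by
        rw [hprod]
        simp only [map_mul, map_inv, mul_inv_rev]
        group
      constructor
      · intro y hxy
        rw [heq] at hxy
        exact hconj.trans ((ih _ hx₂r).1 y hxy)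
      · intro y hxy
        rw [heq] at hxy
        exact (ih _ hx₂r).2 y hxy
    | false =>
      have key : ∀ (j : Bool) (y : G j),
          (Monoid.PushoutI.NormalWord.cons a w hmw hgr).prod⁻¹ * of (φ := φ) true x *
            (Monoid.PushoutI.NormalWord.cons a w hmw hgr).prod ≠ of (φ := φ) j y := by
        intro j y hxy
        refine aux_big_word_ne hφ w hw1 hmw hgr hxr j y ?_
        rw [← hxy, hprod]
        simp only [mul_inv_rev, map_inv]
        group
      exact ⟨fun y hxy => absurd hxy (key true y), fun y hxy => (key false y) hxy⟩
  | base h w hw1 ih =>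
    intro x hx
    have hprod : (base φ h • w).prod = base φ h * w.prod := by
      rw [Monoid.PushoutI.NormalWord.prod_smul]
    have hconj : IsConj x ((φ true h)⁻¹ * x * (φ true h)) := by
      rw [isConj_iff]
      exact ⟨(φ true h)⁻¹, by group⟩
    have hx₂r : ∀ c ∈ (φ true).range, ¬ IsConj ((φ true h)⁻¹ * x * (φ true h)) c :=
      fun c hc hcj => hx c hc (hconj.trans hcj)
    have hbase : base φ h = of (φ := φ) true (φ true h) :=
      (Monoid.PushoutI.of_apply_eq_base φ true h).symm
    have heq : (base φ h • w).prod⁻¹ * of (φ := φ) true x * (base φ h • w).prod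
        = w.prod⁻¹ * of (φ := φ) true ((φ true h)⁻¹ * x * (φ true h)) * w.prod := by
      rw [hprod, hbase]
      simp only [map_mul, map_inv, mul_inv_rev]
      group
    constructor
    · intro y hxy
      rw [heq] at hxy
      exact hconj.trans ((ih _ hx₂r).1 y hxy)
    · intro y hxy
      rw [heq] at hxy
      exact (ih _ hx₂r).2 y hxy

end Aux3

/-- Conjugacy theorem for amalgamated products, specialized to a free group
factor: if `x, y` lie in a free group `F = G true`, are conjugate in the
amalgamated product `G true *_C G false` over a cyclic subgroup `C`, and
neither is conjugate in `F` into `C`, then `x` and `y` are conjugate in `F`. -/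
theorem amalgam_conjugacy_free_factor {C : Type*} [Group C] [IsCyclic C]
    {G : Bool → Type*} [∀ i, Group (G i)] [IsFreeGroup (G true)]
    (φ : ∀ i, C →* G i) (hφ : ∀ i, Function.Injective (φ i))
    (x y : G true)
    (hx : ∀ c ∈ (φ true).range, ¬ IsConj x c)
    (hy : ∀ c ∈ (φ true).range, ¬ IsConj y c)
    (h : IsConj (Monoid.PushoutI.of (φ := φ) true x)
                (Monoid.PushoutI.of (φ := φ) true y)) :
    IsConj x y := by
  classical
  obtain ⟨d⟩ := transversal_nonempty φ hφ
  rw [isConj_iff] at h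
  obtain ⟨g, hg⟩ := h
  set w : NormalWord d := Monoid.PushoutI.NormalWord.equiv (d := d) g⁻¹ with hwdef
  have hw : w.prod = g⁻¹ := by
    rw [hwdef]
    show (g⁻¹ • Monoid.PushoutI.NormalWord.empty).prod = g⁻¹
    rw [Monoid.PushoutI.NormalWord.prod_smul, Monoid.PushoutI.NormalWord.prod_empty, mul_one]
  refine (aux_key hφ d w x hx).1 y ?_
  rw [hw, inv_inv, hg]
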